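/- arXiv:2311.02200 — 2 statements merged into one kernel-verified Lean document; each statement's English description precedes it below -/
import Mathlib

section
/- Let μ be a functional assigning a positive real μ(τ,ρ) to each bounded interval τ ⊂ ℝ of positive length and each positive measurable function ρ on τ, and suppose μ satisfies Constancy and Geometric Averaging. Let τ be a bounded interval of positive length partitioned into finitely many consecutive intervals τ₁, …, τ_N of positive lengths, and let s be the step function equal to the constant s_n > 0 on τ_n for each n. Then |τ| · ln μ(τ,s) = ∑_{n=1}^{N} |τ_n| · ln s_n = ∫_τ ln s(t) dt. -/
open MeasureTheory

/-- Constancy: μ of a function constant equal to `c > 0` on the interval equals `c`. -/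
def Constancy (μ : ℝ → ℝ → (ℝ → ℝ) → ℝ) : Prop :=
  ∀ (a b : ℝ) (ρ : ℝ → ℝ) (c : ℝ), a < b → Measurable ρ →
    (∀ t ∈ Set.Ioo a b, 0 < ρ t) →
    0 < c → (∀ t ∈ Set.Ioo a b, ρ t = c) → μ a b ρ = c

/-- Geometric averaging for two-part partitions: splitting `(a,b)` at an interior
point `m`. -/
def GeomAvg (μ : ℝ → ℝ → (ℝ → ℝ) → ℝ) : Prop :=
  ∀ (a m b : ℝ) (ρ : ℝ → ℝ), a < m → m < b → Measurable ρ →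
    (∀ t ∈ Set.Ioo a b, 0 < ρ t) →
    μ a b ρ ^ (b - a) = μ a m ρ ^ (m - a) * μ m b ρ ^ (b - m)

/-- For a functional satisfying Constancy and Geometric Averaging, and a positive
step function `s` with value `sv n` on the `n`-th subinterval of a finite partition,
`|τ| ln μ(τ,s) = ∑ₙ |τₙ| ln sₙ = ∫_τ ln s`. -/
theorem mu_of_step_function (μ : ℝ → ℝ → (ℝ → ℝ) → ℝ)
    (hC : Constancy μ) (hGA : GeomAvg μ)
    (hpos : ∀ (a b : ℝ) (ρ : ℝ → ℝ), a < b → Measurable ρ →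
      (∀ t ∈ Set.Ioo a b, 0 < ρ t) → 0 < μ a b ρ)
    (N : ℕ) (hN : 1 ≤ N) (t : ℕ → ℝ) (ht : ∀ n < N, t n < t (n + 1))
    (sv : ℕ → ℝ) (hsv : ∀ n < N, 0 < sv n)
    (s : ℝ → ℝ) (hms : Measurable s)
    (hstep : ∀ n < N, ∀ x ∈ Set.Ioo (t n) (t (n + 1)), s x = sv n)
    (hspos : ∀ x ∈ Set.Ioo (t 0) (t N), 0 < s x) :
    (t N - t 0) * Real.log (μ (t 0) (t N) s) =
        ∑ n ∈ Finset.range N, (t (n + 1) - t n) * Real.log (sv n) ∧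
    ∑ n ∈ Finset.range N, (t (n + 1) - t n) * Real.log (sv n) =
        ∫ x in Set.Ioo (t 0) (t N), Real.log (s x) := by
  -- monotonicity of the partition points
  have hlt : ∀ i j : ℕ, i < j → j ≤ N → t i < t j := by
    intro i j hij hjN
    induction j with
    | zero => omega
    | succ m ih =>
      rcases Nat.lt_succ_iff_lt_or_eq.mp hij with h | h
      · exact (ih h (by omega)).trans (ht m (by omega))
      · subst h; exact ht i (by omega)
  have hsub : ∀ M ≤ N, Set.Ioo (t 0) (t M) ⊆ Set.Ioo (t 0) (t N) := by
    intro M hM x hx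
    rcases eq_or_lt_of_le hM with rfl | h
    · exact hx
    · exact ⟨hx.1, hx.2.trans (hlt M N h le_rfl)⟩
  have hpospiece : ∀ n < N, ∀ x ∈ Set.Ioo (t n) (t (n + 1)), 0 < s x := by
    intro n hn x hx
    rw [hstep n hn x hx]; exact hsv n hn
  have hmupiece : ∀ n < N, μ (t n) (t (n + 1)) s = sv n := fun n hn =>
    hC (t n) (t (n + 1)) s (sv n) (ht n hn) hms (hpospiece n hn) (hsv n hn) (hstep n hn)
  -- per-piece integrability and integral value
  have hintpiece : ∀ n < N,
      IntegrableOn (fun x => Real.log (s x)) (Set.Ioo (t n) (t (n + 1))) volume ∧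
      ∫ x in Set.Ioo (t n) (t (n + 1)), Real.log (s x)
        = (t (n + 1) - t n) * Real.log (sv n) := by
    intro n hn
    have hcong : Set.EqOn (fun x => Real.log (s x)) (fun _ => Real.log (sv n))
        (Set.Ioo (t n) (t (n + 1))) := by
      intro x hx; simp [hstep n hn x hx]
    have hvol : volume (Set.Ioo (t n) (t (n + 1))) < ⊤ := by
      rw [Real.volume_Ioo]; exact ENNReal.ofReal_lt_top
    constructor
    · exact (integrableOn_congr_fun hcong measurableSet_Ioo).mpr
        (integrableOn_const hvol.ne)
    · rw [setIntegral_congr_fun measurableSet_Ioo hcong, setIntegral_const]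
      rw [Real.volume_real_Ioo_of_le (le_of_lt (ht n hn))]
      simp
  -- additivity of the integral over adjacent open intervals
  have hadd : ∀ (a m b : ℝ), a < m → m < b →
      IntegrableOn (fun x => Real.log (s x)) (Set.Ioo a m) volume →
      IntegrableOn (fun x => Real.log (s x)) (Set.Ioo m b) volume →
      IntegrableOn (fun x => Real.log (s x)) (Set.Ioo a b) volume ∧
      ∫ x in Set.Ioo a b, Real.log (s x)
        = (∫ x in Set.Ioo a m, Real.log (s x)) + ∫ x in Set.Ioo m b, Real.log (s x) := by
    intro a m b ham hmb h1 h2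
    have h1' : IntegrableOn (fun x => Real.log (s x)) (Set.Ioc a m) volume :=
      (integrableOn_Ioc_iff_integrableOn_Ioo).mpr h1
    have h2' : IntegrableOn (fun x => Real.log (s x)) (Set.Ioc m b) volume :=
      (integrableOn_Ioc_iff_integrableOn_Ioo).mpr h2
    have hdisj : Disjoint (Set.Ioc a m) (Set.Ioc m b) := by
      apply Set.disjoint_left.mpr
      intro x hx hx'
      exact absurd hx.2 (not_le.mpr hx'.1)
    have hunion : Set.Ioc a m ∪ Set.Ioc m b = Set.Ioc a b :=
      Set.Ioc_union_Ioc_eq_Ioc ham.le hmb.le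
    have hab : IntegrableOn (fun x => Real.log (s x)) (Set.Ioc a b) volume := by
      rw [← hunion]; exact h1'.union h2'
    constructor
    · exact (integrableOn_Ioc_iff_integrableOn_Ioo).mp hab
    · rw [← integral_Ioc_eq_integral_Ioo, ← hunion,
        setIntegral_union hdisj measurableSet_Ioc h1' h2',
        integral_Ioc_eq_integral_Ioo, integral_Ioc_eq_integral_Ioo]
  -- taking logs in the geometric averaging identity
  have hlog : ∀ (M : ℕ), 1 ≤ M → M < N →
      (t (M + 1) - t 0) * Real.log (μ (t 0) (t (M + 1)) s)
        = (t M - t 0) * Real.log (μ (t 0) (t M) s)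
          + (t (M + 1) - t M) * Real.log (sv M) := by
    intro M hM1 hMN
    have h0M : t 0 < t M := hlt 0 M (by omega) (by omega)
    have hM1' : t M < t (M + 1) := ht M hMN
    have hposM1 : ∀ x ∈ Set.Ioo (t 0) (t (M + 1)), 0 < s x := fun x hx =>
      hspos x (hsub (M + 1) (by omega) hx)
    have hposM : ∀ x ∈ Set.Ioo (t 0) (t M), 0 < s x := fun x hx =>
      hspos x (hsub M (by omega) hx)
    have hga := hGA (t 0) (t M) (t (M + 1)) s h0M hM1' hms hposM1
    have p1 : 0 < μ (t 0) (t (M + 1)) s :=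
      hpos _ _ s (h0M.trans hM1') hms hposM1
    have p2 : 0 < μ (t 0) (t M) s := hpos _ _ s h0M hms hposM
    have p3 : 0 < μ (t M) (t (M + 1)) s := hpos _ _ s hM1' hms (hpospiece M hMN)
    have := congrArg Real.log hga
    rw [Real.log_rpow p1, Real.log_mul (ne_of_gt (Real.rpow_pos_of_pos p2 _))
      (ne_of_gt (Real.rpow_pos_of_pos p3 _)), Real.log_rpow p2, Real.log_rpow p3,
      hmupiece M hMN] at this
    exact this
  -- main induction
  have key : ∀ M : ℕ, 1 ≤ M → M ≤ N →
      ((t M - t 0) * Real.log (μ (t 0) (t M) s)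
          = ∑ n ∈ Finset.range M, (t (n + 1) - t n) * Real.log (sv n)) ∧
      IntegrableOn (fun x => Real.log (s x)) (Set.Ioo (t 0) (t M)) volume ∧
      (∑ n ∈ Finset.range M, (t (n + 1) - t n) * Real.log (sv n)
          = ∫ x in Set.Ioo (t 0) (t M), Real.log (s x)) := by
    intro M
    induction M with
    | zero => omega
    | succ M ih =>
      intro _ hMN
      rcases Nat.eq_zero_or_pos M with rfl | hM1
      · refine ⟨?_, (hintpiece 0 (by omega)).1, ?_⟩
        · rw [hmupiece 0 (by omega)]; simp
        · rw [(hintpiece 0 (by omega)).2]; simp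
      · obtain ⟨ih1, ih2, ih3⟩ := ih hM1 (by omega)
        have hMN' : M < N := by omega
        have h0M : t 0 < t M := hlt 0 M (by omega) (by omega)
        have hM1' : t M < t (M + 1) := ht M hMN'
        obtain ⟨hint, heq⟩ := hadd (t 0) (t M) (t (M + 1)) h0M hM1' ih2
          (hintpiece M hMN').1
        refine ⟨?_, hint, ?_⟩
        · rw [hlog M hM1 hMN', ih1, Finset.sum_range_succ]
        · rw [Finset.sum_range_succ, ih3, (hintpiece M hMN').2.symm, heq]
  obtain ⟨k1, _, k3⟩ := key N hN le_rfl
  exact ⟨k1, k3⟩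
end

section
/- Fix σ_p > 0, ω ≠ 0, and an open interval I = (t_k, t_{k+1}). Suppose v : I → ℝ, λ = (λ₁, λ₂) : I → ℝ², and x = (x₁, x₂) : I → ℝ² are differentiable and satisfy, for all t ∈ I: −v(t)/σ_p² + λ₂(t) = 0; λ₁'(t) = ω² λ₂(t) and λ₂'(t) = −λ₁(t); x₁'(t) = x₂(t) and x₂'(t) = −ω² x₁(t) + v(t). Then there exist constants c₁, c₂, c₃, c₄ ∈ ℝ such that for all t ∈ I, x₁(t) = (c₁ t + c₂) sin(ωt) + (c₃ t + c₄) cos(ωt), with x₂ = x₁', v = x₁'' + ω² x₁, λ₂ = v/σ_p², and λ₁ = −λ₂'. Conversely, for any constants c₁, c₂, c₃, c₄ ∈ ℝ, setting x₁(t) = (c₁ t + c₂) sin(ωt) + (c₃ t + c₄) cos(ωt), x₂ = x₁', v = x₁'' + ω² x₁, λ₂ = v/σ_p², and λ₁ = −λ₂' defines a solution of the system on I. -/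
open Real Set

lemma const_on_Ioo {a b : ℝ} {f : ℝ → ℝ}
    (h : ∀ t ∈ Set.Ioo a b, HasDerivAt f 0 t) {s t : ℝ}
    (hs : s ∈ Set.Ioo a b) (ht : t ∈ Set.Ioo a b) : f s = f t := by
  apply (convex_Ioo a b).is_const_of_fderivWithin_eq_zero
    (fun x hx => ((h x hx).differentiableAt).differentiableWithinAt)
    (fun x hx => ?_) hs ht
  rw [fderivWithin_of_isOpen isOpen_Ioo hx, (h x hx).hasFDerivAt.fderiv]
  ext; simp

lemma harmonic_form {a b ω : ℝ} (hω : ω ≠ 0) {f d : ℝ → ℝ} {t0 : ℝ} (ht0 : t0 ∈ Set.Ioo a b)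
    (hf : ∀ t ∈ Set.Ioo a b, HasDerivAt f (d t) t)
    (hd : ∀ t ∈ Set.Ioo a b, HasDerivAt d (-(ω ^ 2 * f t)) t) :
    ∃ A B : ℝ, ∀ t ∈ Set.Ioo a b,
      f t = A * Real.cos (ω * t) + B * Real.sin (ω * t) ∧
      d t = -(A * ω) * Real.sin (ω * t) + B * ω * Real.cos (ω * t) := by
  set g1 : ℝ → ℝ := fun t => f t * Real.cos (ω * t) - (d t / ω) * Real.sin (ω * t) with hg1
  set g2 : ℝ → ℝ := fun t => f t * Real.sin (ω * t) + (d t / ω) * Real.cos (ω * t) with hg2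
  have hcos : ∀ t : ℝ, HasDerivAt (fun s => Real.cos (ω * s)) (-ω * Real.sin (ω * t)) t := by
    intro t
    exact ((Real.hasDerivAt_cos (ω * t)).comp t ((hasDerivAt_id t).const_mul ω)).congr_deriv (by ring)
  have hsin : ∀ t : ℝ, HasDerivAt (fun s => Real.sin (ω * s)) (ω * Real.cos (ω * t)) t := by
    intro t
    exact ((Real.hasDerivAt_sin (ω * t)).comp t ((hasDerivAt_id t).const_mul ω)).congr_deriv (by ring)
  have hg1' : ∀ t ∈ Set.Ioo a b, HasDerivAt g1 0 t := by
    intro t ht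
    have := (((hf t ht).mul (hcos t)).sub (((hd t ht).div_const ω).mul (hsin t)))
    refine this.congr_deriv ?_
    field_simp
    ring
  have hg2' : ∀ t ∈ Set.Ioo a b, HasDerivAt g2 0 t := by
    intro t ht
    have := (((hf t ht).mul (hsin t)).add (((hd t ht).div_const ω).mul (hcos t)))
    refine this.congr_deriv ?_
    field_simp
    ring
  refine ⟨g1 t0, g2 t0, fun t ht => ?_⟩
  have e1 : g1 t = g1 t0 := const_on_Ioo hg1' ht ht0
  have e2 : g2 t = g2 t0 := const_on_Ioo hg2' ht ht0
  have pyth : Real.cos (ω * t) ^ 2 + Real.sin (ω * t) ^ 2 = 1 := by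
    rw [add_comm]; exact Real.sin_sq_add_cos_sq (ω * t)
  constructor
  · have : g1 t * Real.cos (ω * t) + g2 t * Real.sin (ω * t) = f t := by
      simp only [hg1, hg2]; linear_combination f t * pyth
    rw [e1, e2] at this; linarith
  · have : ω * (-(g1 t) * Real.sin (ω * t) + g2 t * Real.cos (ω * t)) = d t := by
      simp only [hg1, hg2]; field_simp; linear_combination d t * pyth
    rw [e1, e2] at this; linarith

/-- For the stochastic harmonic oscillator, solutions of the optimality ODEs
`−v/σp² + λ₂ = 0`, `λ₁' = ω²λ₂`, `λ₂' = −λ₁`, `x₁' = x₂`, `x₂' = −ω²x₁ + v` on the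
open interval `(tk, tk1)` are exactly the modified harmonics
`x₁(t) = (c₁ t + c₂) sin ωt + (c₃ t + c₄) cos ωt`, with `x₂ = x₁'`,
`v = x₁'' + ω² x₁`, `λ₂ = v/σp²`, `λ₁ = −λ₂'`. -/
theorem harmonic_oscillator_optimal_spline (σp ω tk tk1 : ℝ) (hσp : 0 < σp)
    (hω : ω ≠ 0) (hlt : tk < tk1) :
    -- forward direction: any solution of the system is a modified harmonic
    (∀ v lam1 lam2 x1 x2 : ℝ → ℝ,
      (∀ t ∈ Set.Ioo tk tk1, -(v t) / σp ^ 2 + lam2 t = 0) →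
      (∀ t ∈ Set.Ioo tk tk1, HasDerivAt lam1 (ω ^ 2 * lam2 t) t) →
      (∀ t ∈ Set.Ioo tk tk1, HasDerivAt lam2 (-(lam1 t)) t) →
      (∀ t ∈ Set.Ioo tk tk1, HasDerivAt x1 (x2 t) t) →
      (∀ t ∈ Set.Ioo tk tk1, HasDerivAt x2 (-ω ^ 2 * x1 t + v t) t) →
      ∃ c1 c2 c3 c4 : ℝ, ∀ t ∈ Set.Ioo tk tk1,
        x1 t = (c1 * t + c2) * Real.sin (ω * t) + (c3 * t + c4) * Real.cos (ω * t) ∧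
        x2 t = c1 * Real.sin (ω * t) + ω * (c1 * t + c2) * Real.cos (ω * t) +
            c3 * Real.cos (ω * t) - ω * (c3 * t + c4) * Real.sin (ω * t) ∧
        v t = 2 * ω * c1 * Real.cos (ω * t) - 2 * ω * c3 * Real.sin (ω * t) ∧
        lam2 t = (2 * ω * c1 * Real.cos (ω * t) - 2 * ω * c3 * Real.sin (ω * t)) / σp ^ 2 ∧
        lam1 t = (2 * ω ^ 2 * c1 * Real.sin (ω * t) + 2 * ω ^ 2 * c3 * Real.cos (ω * t)) / σp ^ 2) ∧
    -- converse: for any constants the explicit formulas solve the system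
    (∀ c1 c2 c3 c4 : ℝ, ∀ t ∈ Set.Ioo tk tk1,
      -(2 * ω * c1 * Real.cos (ω * t) - 2 * ω * c3 * Real.sin (ω * t)) / σp ^ 2 +
          (2 * ω * c1 * Real.cos (ω * t) - 2 * ω * c3 * Real.sin (ω * t)) / σp ^ 2 = 0 ∧
      HasDerivAt (fun s : ℝ =>
          (2 * ω ^ 2 * c1 * Real.sin (ω * s) + 2 * ω ^ 2 * c3 * Real.cos (ω * s)) / σp ^ 2)
        (ω ^ 2 * ((2 * ω * c1 * Real.cos (ω * t) - 2 * ω * c3 * Real.sin (ω * t)) / σp ^ 2)) t ∧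
      HasDerivAt (fun s : ℝ =>
          (2 * ω * c1 * Real.cos (ω * s) - 2 * ω * c3 * Real.sin (ω * s)) / σp ^ 2)
        (-((2 * ω ^ 2 * c1 * Real.sin (ω * t) + 2 * ω ^ 2 * c3 * Real.cos (ω * t)) / σp ^ 2)) t ∧
      HasDerivAt (fun s : ℝ =>
          (c1 * s + c2) * Real.sin (ω * s) + (c3 * s + c4) * Real.cos (ω * s))
        (c1 * Real.sin (ω * t) + ω * (c1 * t + c2) * Real.cos (ω * t) +
          c3 * Real.cos (ω * t) - ω * (c3 * t + c4) * Real.sin (ω * t)) t ∧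
      HasDerivAt (fun s : ℝ =>
          c1 * Real.sin (ω * s) + ω * (c1 * s + c2) * Real.cos (ω * s) +
            c3 * Real.cos (ω * s) - ω * (c3 * s + c4) * Real.sin (ω * s))
        (-ω ^ 2 * ((c1 * t + c2) * Real.sin (ω * t) + (c3 * t + c4) * Real.cos (ω * t)) +
          (2 * ω * c1 * Real.cos (ω * t) - 2 * ω * c3 * Real.sin (ω * t))) t) := by
  have hσ2 : σp ^ 2 ≠ 0 := pow_ne_zero 2 (ne_of_gt hσp)
  have hcos : ∀ t : ℝ, HasDerivAt (fun s => Real.cos (ω * s)) (-ω * Real.sin (ω * t)) t := by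
    intro t
    exact ((Real.hasDerivAt_cos (ω * t)).comp t ((hasDerivAt_id t).const_mul ω)).congr_deriv (by ring)
  have hsin : ∀ t : ℝ, HasDerivAt (fun s => Real.sin (ω * s)) (ω * Real.cos (ω * t)) t := by
    intro t
    exact ((Real.hasDerivAt_sin (ω * t)).comp t ((hasDerivAt_id t).const_mul ω)).congr_deriv (by ring)
  constructor
  · intro v lam1 lam2 x1 x2 h0 h1 h2 h3 h4
    have ht0 : (tk + tk1) / 2 ∈ Set.Ioo tk tk1 := ⟨by linarith, by linarith⟩
    have hv : ∀ t ∈ Set.Ioo tk tk1, v t = σp ^ 2 * lam2 t := by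
      intro t ht
      have := h0 t ht
      field_simp at this
      linarith
    obtain ⟨A, B, hAB⟩ := harmonic_form hω ht0 h2
      (fun t ht => by exact (h1 t ht).neg)
    set a : ℝ := σp ^ 2 * A with ha
    set b : ℝ := σp ^ 2 * B with hb
    set p : ℝ → ℝ := fun t =>
      a / (2 * ω) * (t * Real.sin (ω * t)) - b / (2 * ω) * (t * Real.cos (ω * t)) with hpdef
    set q : ℝ → ℝ := fun t =>
      a / (2 * ω) * (Real.sin (ω * t) + t * (ω * Real.cos (ω * t))) -
      b / (2 * ω) * (Real.cos (ω * t) + t * (-ω * Real.sin (ω * t))) with hqdef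
    have hp : ∀ t : ℝ, HasDerivAt p (q t) t := by
      intro t
      have h1' : HasDerivAt (fun s : ℝ => s * Real.sin (ω * s))
          (1 * Real.sin (ω * t) + t * (ω * Real.cos (ω * t))) t :=
        (hasDerivAt_id t).mul (hsin t)
      have h2' : HasDerivAt (fun s : ℝ => s * Real.cos (ω * s))
          (1 * Real.cos (ω * t) + t * (-ω * Real.sin (ω * t))) t :=
        (hasDerivAt_id t).mul (hcos t)
      have := (h1'.const_mul (a / (2 * ω))).sub (h2'.const_mul (b / (2 * ω)))
      refine this.congr_deriv ?_
      simp only [hqdef]; ring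
    have hq : ∀ t : ℝ, HasDerivAt q
        (-ω ^ 2 * p t + (a * Real.cos (ω * t) + b * Real.sin (ω * t))) t := by
      intro t
      have h1' : HasDerivAt (fun s : ℝ => Real.sin (ω * s) + s * (ω * Real.cos (ω * s)))
          (ω * Real.cos (ω * t) + (1 * (ω * Real.cos (ω * t)) + t * (ω * (-ω * Real.sin (ω * t))))) t :=
        (hsin t).add ((hasDerivAt_id t).mul ((hcos t).const_mul ω))
      have h2' : HasDerivAt (fun s : ℝ => Real.cos (ω * s) + s * (-ω * Real.sin (ω * s)))
          (-ω * Real.sin (ω * t) + (1 * (-ω * Real.sin (ω * t)) + t * (-ω * (ω * Real.cos (ω * t))))) t :=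
        (hcos t).add ((hasDerivAt_id t).mul ((hsin t).const_mul (-ω)))
      have := (h1'.const_mul (a / (2 * ω))).sub (h2'.const_mul (b / (2 * ω)))
      refine this.congr_deriv ?_
      simp only [hpdef]
      field_simp
      ring
    have hh : ∀ t ∈ Set.Ioo tk tk1,
        HasDerivAt (fun s => x1 s - p s) (x2 t - q t) t :=
      fun t ht => (h3 t ht).sub (hp t)
    have hh' : ∀ t ∈ Set.Ioo tk tk1,
        HasDerivAt (fun s => x2 s - q s) (-(ω ^ 2 * (x1 t - p t))) t := by
      intro t ht
      have := (h4 t ht).sub (hq t)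
      refine this.congr_deriv ?_
      have hv' := hv t ht
      have hl2 := (hAB t ht).1
      rw [hv', hl2]
      simp only [ha, hb]
      ring
    obtain ⟨C, D, hCD⟩ := harmonic_form hω ht0 hh hh'
    refine ⟨a / (2 * ω), D, -(b / (2 * ω)), C, fun t ht => ?_⟩
    obtain ⟨hx1e, hx2e⟩ := hCD t ht
    obtain ⟨hl2e, hl1e⟩ := hAB t ht
    have hve := hv t ht
    refine ⟨?_, ?_, ?_, ?_, ?_⟩
    · have : x1 t = C * Real.cos (ω * t) + D * Real.sin (ω * t) + p t := by linarith
      rw [this]; simp only [hpdef]; ring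
    · have : x2 t = -(C * ω) * Real.sin (ω * t) + D * ω * Real.cos (ω * t) + q t := by
        linarith
      rw [this]; simp only [hqdef]; field_simp; ring
    · rw [hve, hl2e]; simp only [ha, hb]; field_simp; ring
    · rw [hl2e]; simp only [ha, hb]; field_simp; ring
    · have : lam1 t = A * ω * Real.sin (ω * t) - B * ω * Real.cos (ω * t) := by linarith
      rw [this]; simp only [ha, hb]; field_simp; ring
  · intro c1 c2 c3 c4 t ht
    refine ⟨by ring, ?_, ?_, ?_, ?_⟩
    · have := (((hsin t).const_mul (2 * ω ^ 2 * c1)).add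
        ((hcos t).const_mul (2 * ω ^ 2 * c3))).div_const (σp ^ 2)
      refine this.congr_deriv ?_
      field_simp; ring
    · have := (((hcos t).const_mul (2 * ω * c1)).sub
        ((hsin t).const_mul (2 * ω * c3))).div_const (σp ^ 2)
      refine this.congr_deriv ?_
      field_simp; ring
    · have hl1 : HasDerivAt (fun s : ℝ => c1 * s + c2) c1 t := by
        simpa using ((hasDerivAt_id t).const_mul c1).add_const c2
      have hl3 : HasDerivAt (fun s : ℝ => c3 * s + c4) c3 t := by
        simpa using ((hasDerivAt_id t).const_mul c3).add_const c4
      have := (hl1.mul (hsin t)).add (hl3.mul (hcos t))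
      refine this.congr_deriv ?_
      ring
    · have hl1 : HasDerivAt (fun s : ℝ => ω * (c1 * s + c2)) (ω * c1) t := by
        simpa using (((hasDerivAt_id t).const_mul c1).add_const c2).const_mul ω
      have hl3 : HasDerivAt (fun s : ℝ => ω * (c3 * s + c4)) (ω * c3) t := by
        simpa using (((hasDerivAt_id t).const_mul c3).add_const c4).const_mul ω
      have := ((((hsin t).const_mul c1).add (hl1.mul (hcos t))).add
        ((hcos t).const_mul c3)).sub (hl3.mul (hsin t))
      refine this.congr_deriv ?_
      ring
end
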